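/- If a nondecreasing continuous function r : [1,∞) → [1,∞) satisfies r(t) ≤ c + c·∫_1^t r(s)^{1−η}/s^{(d−1)η} ds for all t ≥ 1, where η ∈ (0,1) and (d−1)η > 1, then r is bounded: sup_{t ≥ 1} r(t) < ∞. -/

import Mathlib

open Real

theorem stmt_19 (c η : ℝ) (d : ℕ) (hc : 0 < c) (hη0 : 0 < η) (hη1 : η < 1)
    (hd : 2 ≤ d) (hdη : 1 < ((d : ℝ) - 1) * η)
    (r : ℝ → ℝ)
    (hrcont : ContinuousOn r (Set.Ici (1 : ℝ)))
    (hrmono : MonotoneOn r (Set.Ici (1 : ℝ)))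
    (hr1 : ∀ t, 1 ≤ t → 1 ≤ r t)
    (hint : ∀ t, 1 ≤ t →
      r t ≤ c + c * ∫ s in (1:ℝ)..t, (r s) ^ (1 - η) / s ^ (((d : ℝ) - 1) * η)) :
    ∃ B : ℝ, ∀ t, 1 ≤ t → r t ≤ B := by
  set α : ℝ := ((d : ℝ) - 1) * η with hα
  have hα1 : 1 < α := hdη
  have hMpos : 0 < 1 / (α - 1) := div_pos one_pos (by linarith)
  set M : ℝ := 1 / (α - 1) with hM
  refine ⟨(c + c * M) ^ (1 / η), fun t ht => ?_⟩
  have hrt1 : 1 ≤ r t := hr1 t ht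
  have hrtpos : (0 : ℝ) < r t := lt_of_lt_of_le one_pos hrt1
  have h1η : (0 : ℝ) < 1 - η := by linarith
  -- continuity facts
  have hIcc : Set.Icc (1 : ℝ) t ⊆ Set.Ici (1 : ℝ) := fun x hx => hx.1
  have hpow_cont : ContinuousOn (fun s : ℝ => s ^ α) (Set.Icc (1 : ℝ) t) := by
    intro x hx
    exact (Real.continuousAt_rpow_const x α (Or.inl (by linarith [hx.1]))).continuousWithinAt
  have hf_cont : ContinuousOn (fun s : ℝ => (r s) ^ (1 - η) / s ^ α) (Set.Icc (1 : ℝ) t) := by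
    apply ContinuousOn.div
    · apply ContinuousOn.rpow_const (hrcont.mono hIcc)
      intro x hx
      exact Or.inl (by have := hr1 x (hx.1); positivity)
    · exact hpow_cont
    · intro x hx
      have : (0:ℝ) < x ^ α := Real.rpow_pos_of_pos (by linarith [hx.1]) α
      exact ne_of_gt this
  have hg_cont : ContinuousOn (fun s : ℝ => (r t) ^ (1 - η) * s ^ (-α)) (Set.Icc (1 : ℝ) t) := by
    apply ContinuousOn.mul continuousOn_const
    intro x hx
    exact (Real.continuousAt_rpow_const x (-α) (Or.inl (by linarith [hx.1]))).continuousWithinAt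
  have huIcc : Set.uIcc (1 : ℝ) t = Set.Icc (1 : ℝ) t := Set.uIcc_of_le ht
  have hf_int : IntervalIntegrable (fun s : ℝ => (r s) ^ (1 - η) / s ^ α)
      MeasureTheory.volume 1 t := by
    apply ContinuousOn.intervalIntegrable
    rwa [huIcc]
  have hg_int : IntervalIntegrable (fun s : ℝ => (r t) ^ (1 - η) * s ^ (-α))
      MeasureTheory.volume 1 t := by
    apply ContinuousOn.intervalIntegrable
    rwa [huIcc]
  -- pointwise bound
  have hmono_int : (∫ s in (1:ℝ)..t, (r s) ^ (1 - η) / s ^ α)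
      ≤ ∫ s in (1:ℝ)..t, (r t) ^ (1 - η) * s ^ (-α) := by
    apply intervalIntegral.integral_mono_on ht hf_int hg_int
    intro x hx
    have hx1 : (1:ℝ) ≤ x := hx.1
    have hxpos : (0:ℝ) < x := by linarith
    have hrx1 : 1 ≤ r x := hr1 x hx1
    have hrle : r x ≤ r t := hrmono hx1 ht hx.2
    have h1 : (r x) ^ (1 - η) ≤ (r t) ^ (1 - η) :=
      Real.rpow_le_rpow (by linarith) hrle (le_of_lt h1η)
    rw [div_eq_mul_inv, ← Real.rpow_neg (le_of_lt hxpos)]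
    exact mul_le_mul_of_nonneg_right h1 (le_of_lt (Real.rpow_pos_of_pos hxpos _))
  -- compute the upper integral
  have hconst : (∫ s in (1:ℝ)..t, (r t) ^ (1 - η) * s ^ (-α))
      = (r t) ^ (1 - η) * ∫ s in (1:ℝ)..t, s ^ (-α) :=
    intervalIntegral.integral_const_mul _ _
  have hne : (0:ℝ) ∉ Set.uIcc (1:ℝ) t := by
    rw [huIcc]; intro h; exact absurd h.1 (by norm_num)
  have hαne : -α ≠ -1 := by intro h; nlinarith
  have hval : (∫ s in (1:ℝ)..t, s ^ (-α)) = (t ^ (-α + 1) - 1 ^ (-α + 1)) / (-α + 1) :=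
    integral_rpow (Or.inr ⟨hαne, hne⟩)
  have hint_le : (∫ s in (1:ℝ)..t, s ^ (-α)) ≤ M := by
    rw [hval, Real.one_rpow]
    have htpow : (0:ℝ) < t ^ (-α + 1) := Real.rpow_pos_of_pos (by linarith) _
    have hne1 : (-α + 1 : ℝ) ≠ 0 := by intro h; linarith
    have hne2 : (α - 1 : ℝ) ≠ 0 := by intro h; linarith
    have key : (t ^ (-α + 1) - 1) / (-α + 1) = (1 - t ^ (-α + 1)) / (α - 1) := by
      field_simp
      ring
    rw [key, hM]
    gcongr
    · linarith
  -- assemble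
  have hrpow_pos : (0:ℝ) < (r t) ^ (1 - η) := Real.rpow_pos_of_pos hrtpos _
  have hrpow1 : 1 ≤ (r t) ^ (1 - η) := Real.one_le_rpow hrt1 (le_of_lt h1η)
  have step1 : r t ≤ c + c * ((r t) ^ (1 - η) * M) := by
    have h2 : (∫ s in (1:ℝ)..t, (r s) ^ (1 - η) / s ^ α) ≤ (r t) ^ (1 - η) * M := by
      calc (∫ s in (1:ℝ)..t, (r s) ^ (1 - η) / s ^ α)
          ≤ ∫ s in (1:ℝ)..t, (r t) ^ (1 - η) * s ^ (-α) := hmono_int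
        _ = (r t) ^ (1 - η) * ∫ s in (1:ℝ)..t, s ^ (-α) := hconst
        _ ≤ (r t) ^ (1 - η) * M :=
            mul_le_mul_of_nonneg_left hint_le (le_of_lt hrpow_pos)
    calc r t ≤ c + c * ∫ s in (1:ℝ)..t, (r s) ^ (1 - η) / s ^ α := hint t ht
      _ ≤ c + c * ((r t) ^ (1 - η) * M) := by nlinarith
  have step2 : r t ≤ (c + c * M) * (r t) ^ (1 - η) := by nlinarith
  have hsplit : r t = (r t) ^ η * (r t) ^ (1 - η) := by
    rw [← Real.rpow_add hrtpos]
    norm_num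
  have step3 : (r t) ^ η ≤ c + c * M := by
    have h : (r t) ^ η * (r t) ^ (1 - η) ≤ (c + c * M) * (r t) ^ (1 - η) :=
      hsplit.symm.trans_le step2
    exact le_of_mul_le_mul_right h hrpow_pos
  have hfinal : r t = ((r t) ^ η) ^ (1 / η) := by
    rw [one_div, Real.rpow_rpow_inv (le_of_lt hrtpos) (ne_of_gt hη0)]
  rw [hfinal]
  exact Real.rpow_le_rpow (Real.rpow_nonneg (le_of_lt hrtpos) _) step3 (by positivity)
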